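/- Let X ⊆ ℝ^d be a compact convex set with 0 ∉ X. Then the conical hull cone(X) = {λx : x ∈ X, λ > 0} is Capra-convex, for any choice of source norm. -/

import Mathlib

open Classical in
noncomputable def radProj {d : ℕ} (N : EuclideanSpace ℝ (Fin d) → ℝ)
    (x : EuclideanSpace ℝ (Fin d)) : EuclideanSpace ℝ (Fin d) :=
  if x = 0 then 0 else (N x)⁻¹ • x

noncomputable def capraConj {d : ℕ} (N : EuclideanSpace ℝ (Fin d) → ℝ)
    (f : EuclideanSpace ℝ (Fin d) → EReal) (y : EuclideanSpace ℝ (Fin d)) : EReal :=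
  ⨆ x : EuclideanSpace ℝ (Fin d), ((inner ℝ (radProj N x) y : ℝ) : EReal) - f x

noncomputable def capraBiconj {d : ℕ} (N : EuclideanSpace ℝ (Fin d) → ℝ)
    (f : EuclideanSpace ℝ (Fin d) → EReal) (x : EuclideanSpace ℝ (Fin d)) : EReal :=
  ⨆ y : EuclideanSpace ℝ (Fin d), ((inner ℝ (radProj N x) y : ℝ) : EReal) - capraConj N f y

open Classical in
noncomputable def ind {d : ℕ} (X : Set (EuclideanSpace ℝ (Fin d)))
    (x : EuclideanSpace ℝ (Fin d)) : EReal :=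
  if x ∈ X then 0 else ⊤

def IsCapraConvex {d : ℕ} (N : EuclideanSpace ℝ (Fin d) → ℝ)
    (X : Set (EuclideanSpace ℝ (Fin d))) : Prop :=
  ind X = capraBiconj N (ind X)

def coneHull {d : ℕ} (A : Set (EuclideanSpace ℝ (Fin d))) : Set (EuclideanSpace ℝ (Fin d)) :=
  {y | ∃ a ∈ A, ∃ l : ℝ, 0 < l ∧ y = l • a}



section
variable {d : ℕ} {N : EuclideanSpace ℝ (Fin d) → ℝ}
variable (hN0 : ∀ x : EuclideanSpace ℝ (Fin d), N x = 0 ↔ x = 0)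
variable (hNh : ∀ (a : ℝ) (x : EuclideanSpace ℝ (Fin d)), N (a • x) = |a| * N x)
variable (hNt : ∀ x y : EuclideanSpace ℝ (Fin d), N (x + y) ≤ N x + N y)

include hN0 in
lemma N_zero : N 0 = 0 := (hN0 0).2 rfl

include hNh in
lemma N_neg (x : EuclideanSpace ℝ (Fin d)) : N (-x) = N x := by
  rw [← neg_one_smul ℝ x, hNh]; simp

include hN0 hNh hNt in
lemma N_nonneg (x : EuclideanSpace ℝ (Fin d)) : 0 ≤ N x := by
  have h := hNt x (-x)
  rw [add_neg_cancel, N_zero hN0, N_neg hNh] at h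
  linarith

include hN0 hNh hNt in
lemma N_pos {x : EuclideanSpace ℝ (Fin d)} (hx : x ≠ 0) : 0 < N x :=
  lt_of_le_of_ne (N_nonneg hN0 hNh hNt x) (fun h => hx ((hN0 x).1 h.symm))

lemma coord_abs_le_norm (z : EuclideanSpace ℝ (Fin d)) (i : Fin d) : |z i| ≤ ‖z‖ := by
  have h := abs_real_inner_le_norm (EuclideanSpace.single i (1:ℝ)) z
  rw [EuclideanSpace.inner_single_left, EuclideanSpace.norm_single] at h
  simpa using h

lemma eq_sum_single (z : EuclideanSpace ℝ (Fin d)) :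
    z = ∑ i : Fin d, (z i) • EuclideanSpace.single i (1:ℝ) := by
  ext j
  rw [WithLp.ofLp_sum, Finset.sum_apply]
  simp [EuclideanSpace.single_apply]

include hN0 hNt in
lemma N_sum_le {ι : Type*} (s : Finset ι) (f : ι → EuclideanSpace ℝ (Fin d)) :
    N (∑ i ∈ s, f i) ≤ ∑ i ∈ s, N (f i) := by
  classical
  induction s using Finset.induction_on with
  | empty => simp [N_zero hN0]
  | insert _ _ h ih =>
    rw [Finset.sum_insert h, Finset.sum_insert h]
    exact (hNt _ _).trans (by linarith)

include hN0 hNh hNt in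
lemma N_continuous : Continuous N := by
  set K : ℝ := ∑ i : Fin d, N (EuclideanSpace.single i 1) with hK
  have hbound : ∀ z : EuclideanSpace ℝ (Fin d), N z ≤ K * ‖z‖ := by
    intro z
    calc N z ≤ ∑ i : Fin d, N ((z i) • EuclideanSpace.single i (1:ℝ)) := by
          nth_rewrite 1 [eq_sum_single z]
          exact N_sum_le hN0 hNt _ _
      _ ≤ ∑ i : Fin d, N (EuclideanSpace.single i 1) * ‖z‖ := by
          apply Finset.sum_le_sum
          intro i _
          rw [hNh, mul_comm]
          exact mul_le_mul_of_nonneg_left (coord_abs_le_norm z i) (N_nonneg hN0 hNh hNt _)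
      _ = K * ‖z‖ := by rw [← Finset.sum_mul]
  have hK0 : 0 ≤ K := Finset.sum_nonneg fun i _ => N_nonneg hN0 hNh hNt _
  have hlip : LipschitzWith (Real.toNNReal K) N := by
    apply LipschitzWith.of_dist_le_mul
    intro a b
    rw [Real.dist_eq, dist_eq_norm, Real.coe_toNNReal _ hK0, abs_sub_le_iff]
    constructor
    · have h1 := hNt b (a - b); simp only [add_sub_cancel] at h1
      have h2 := hbound (a - b); linarith
    · have h1 := hNt a (b - a); simp only [add_sub_cancel] at h1
      have h2 := hbound (b - a)
      rw [← norm_neg, neg_sub] at h2; linarith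
  exact hlip.continuous

include hNh in
lemma radProj_smul {l : ℝ} (hl : 0 < l) (a : EuclideanSpace ℝ (Fin d)) :
    radProj N (l • a) = radProj N a := by
  rcases eq_or_ne a 0 with rfl | ha
  · simp [radProj]
  · have hla : l • a ≠ 0 := smul_ne_zero (ne_of_gt hl) ha
    rw [radProj, radProj, if_neg hla, if_neg ha, hNh, abs_of_pos hl, smul_smul, mul_inv]
    congr 1
    rw [mul_comm, ← mul_assoc, mul_inv_cancel₀ (ne_of_gt hl), one_mul]

include hN0 hNh hNt in
lemma radProj_eq_self_smul {x : EuclideanSpace ℝ (Fin d)} (hx : x ≠ 0) :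
    x = N x • radProj N x := by
  rw [radProj, if_neg hx, smul_smul, mul_inv_cancel₀ (ne_of_gt (N_pos hN0 hNh hNt hx)), one_smul]

lemma coneHull_convex {X : Set (EuclideanSpace ℝ (Fin d))} (hX : Convex ℝ X) :
    Convex ℝ (coneHull X) := by
  rintro _ ⟨a, ha, l, hl, rfl⟩ _ ⟨b, hb, m, hm, rfl⟩ s t hs ht hst
  rcases eq_or_lt_of_le hs with rfl | hs'
  · simp only [zero_add] at hst; subst hst
    exact ⟨b, hb, m, hm, by simp⟩
  rcases eq_or_lt_of_le ht with rfl | ht'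
  · simp only [add_zero] at hst; subst hst
    exact ⟨a, ha, l, hl, by simp⟩
  have hν : 0 < s * l + t * m := by positivity
  refine ⟨(s * l / (s * l + t * m)) • a + (t * m / (s * l + t * m)) • b,
    hX ha hb (by positivity) (by positivity) (by rw [← add_div, div_self (ne_of_gt hν)]), s * l + t * m, hν, ?_⟩
  rw [smul_add, smul_smul, smul_smul, smul_smul, smul_smul]
  congr 1 <;> congr 1 <;> field_simp

include hN0 hNh hNt in
lemma nonempty_case (X : Set (EuclideanSpace ℝ (Fin d))) (hX : IsCompact X)
    (hXconv : Convex ℝ X) (h0 : (0 : EuclideanSpace ℝ (Fin d)) ∉ X) (hXne : X.Nonempty) :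
    IsCapraConvex N (coneHull X) := by
  classical
  have hNc : Continuous N := N_continuous hN0 hNh hNt
  set C := coneHull X with hCdef
  have hX0 : ∀ a ∈ X, a ≠ (0 : EuclideanSpace ℝ (Fin d)) := fun a ha h => h0 (h ▸ ha)
  have h0C : (0 : EuclideanSpace ℝ (Fin d)) ∉ C := by
    rintro ⟨a, ha, l, hl, heq⟩
    exact hX0 a ha (by
      have := heq.symm
      rwa [smul_eq_zero, or_iff_right (ne_of_gt hl)] at this)
  have hXC : X ⊆ C := fun a ha => ⟨a, ha, 1, one_pos, (one_smul _ _).symm⟩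
  -- radial projection facts
  have hrp : ∀ a ∈ X, radProj N a = (N a)⁻¹ • a := fun a ha => if_neg (hX0 a ha)
  have hrpC : ∀ x ∈ C, ∃ a ∈ X, radProj N x = radProj N a := by
    rintro x ⟨a, ha, l, hl, rfl⟩
    exact ⟨a, ha, radProj_smul hNh hl a⟩
  set S : Set (EuclideanSpace ℝ (Fin d)) := radProj N '' X with hSdef
  have hScont : ContinuousOn (radProj N) X := by
    apply ContinuousOn.congr (f := fun a => (N a)⁻¹ • a)
      (((hNc.continuousOn).inv₀ (fun a ha => ne_of_gt (N_pos hN0 hNh hNt (hX0 a ha)))).smul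
        continuousOn_id)
    exact fun a ha => hrp a ha
  have hSC : S ⊆ C := by
    rintro _ ⟨a, ha, rfl⟩
    exact ⟨a, ha, (N a)⁻¹, inv_pos.2 (N_pos hN0 hNh hNt (hX0 a ha)), hrp a ha⟩
  -- the compact convex "slab" D containing conv S
  obtain ⟨am, hamX, hmin⟩ := hX.exists_isMinOn hXne hNc.continuousOn
  obtain ⟨aM, haMX, hmax⟩ := hX.exists_isMaxOn hXne hNc.continuousOn
  set m : ℝ := N am with hmdef
  set M : ℝ := N aM with hMdef
  have hm : 0 < m := N_pos hN0 hNh hNt (hX0 am hamX)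
  have hM : 0 < M := N_pos hN0 hNh hNt (hX0 aM haMX)
  have hNX : ∀ a ∈ X, m ≤ N a ∧ N a ≤ M := fun a ha => ⟨hmin ha, hmax ha⟩
  set D : Set (EuclideanSpace ℝ (Fin d)) :=
    (fun p : ℝ × EuclideanSpace ℝ (Fin d) => p.1 • p.2) '' (Set.Icc M⁻¹ m⁻¹ ×ˢ X) with hDdef
  have hDcompact : IsCompact D :=
    (isCompact_Icc.prod hX).image (continuous_fst.smul continuous_snd)
  have hSD : S ⊆ D := by
    rintro _ ⟨a, ha, rfl⟩
    refine ⟨((N a)⁻¹, a), ⟨Set.mem_Icc.2 ⟨?_, ?_⟩, ha⟩, (hrp a ha).symm⟩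
    · exact inv_anti₀ (N_pos hN0 hNh hNt (hX0 a ha)) (hNX a ha).2
    · exact inv_anti₀ hm (hNX a ha).1
  have hDconv : Convex ℝ D := by
    rintro _ ⟨⟨μ, a⟩, ⟨hμ, ha⟩, rfl⟩ _ ⟨⟨ν, b⟩, ⟨hν, hb⟩, rfl⟩ s t hs ht hst
    simp only [Set.mem_Icc] at hμ hν
    have hμ0 : 0 < μ := lt_of_lt_of_le (inv_pos.2 hM) hμ.1
    have hν0 : 0 < ν := lt_of_lt_of_le (inv_pos.2 hM) hν.1
    have hw : 0 < s * μ + t * ν := by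
      rcases eq_or_lt_of_le hs with rfl | hs'
      · simp only [zero_add] at hst; subst hst; simpa using hν0
      · have : 0 ≤ t * ν := mul_nonneg ht hν0.le
        nlinarith
    refine ⟨(s * μ + t * ν, (s * μ / (s * μ + t * ν)) • a + (t * ν / (s * μ + t * ν)) • b),
      ⟨?_, hXconv ha hb (by positivity) (by positivity) (by rw [← add_div, div_self (ne_of_gt hw)])⟩, ?_⟩
    · simp only [Set.mem_Icc]
      constructor
      · calc M⁻¹ = s * M⁻¹ + t * M⁻¹ := by rw [← add_mul, hst, one_mul]
          _ ≤ s * μ + t * ν := by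
            have h1 := mul_le_mul_of_nonneg_left hμ.1 hs
            have h2 := mul_le_mul_of_nonneg_left hν.1 ht
            linarith
      · have h1 := mul_le_mul_of_nonneg_left hμ.2 hs
        have h2 := mul_le_mul_of_nonneg_left hν.2 ht
        have h3 : s * m⁻¹ + t * m⁻¹ = m⁻¹ := by rw [← add_mul, hst, one_mul]
        linarith
    · show (s * μ + t * ν) • ((s * μ / (s * μ + t * ν)) • a + (t * ν / (s * μ + t * ν)) • b)
          = s • μ • a + t • ν • b
      have hw' := ne_of_gt hw
      rw [smul_add, smul_smul, smul_smul, smul_smul, smul_smul]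
      congr 2 <;> field_simp <;> ring
  have hDC : D ⊆ C := by
    rintro _ ⟨⟨μ, a⟩, ⟨hμ, ha⟩, rfl⟩
    simp only [Set.mem_Icc] at hμ
    exact ⟨a, ha, μ, lt_of_lt_of_le (inv_pos.2 hM) hμ.1, rfl⟩
  -- the closed convex hull K
  set K : Set (EuclideanSpace ℝ (Fin d)) := closure (convexHull ℝ S) with hKdef
  have hSK : S ⊆ K := (subset_convexHull ℝ S).trans subset_closure
  have hKconv : Convex ℝ K := (convex_convexHull ℝ S).closure
  have hKclosed : IsClosed K := isClosed_closure
  have hKC : K ⊆ C := (closure_minimal (convexHull_min hSD hDconv) hDcompact.isClosed).trans hDC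
  have key : ∀ x : EuclideanSpace ℝ (Fin d), x ∉ C → radProj N x ∉ K := by
    intro x hx hmem
    have hrC : radProj N x ∈ C := hKC hmem
    rcases eq_or_ne x 0 with rfl | hx0
    · rw [radProj, if_pos rfl] at hrC
      exact h0C hrC
    · obtain ⟨a, ha, l, hl, heq⟩ := hrC
      apply hx
      refine ⟨a, ha, N x * l, mul_pos (N_pos hN0 hNh hNt hx0) hl, ?_⟩
      calc x = N x • radProj N x := radProj_eq_self_smul hN0 hNh hNt hx0
        _ = (N x * l) • a := by rw [heq, smul_smul]
  -- the support function g
  set g : EuclideanSpace ℝ (Fin d) → ℝ :=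
    fun y => sSup ((fun a => (inner ℝ (radProj N a) y : ℝ)) '' X) with hgdef
  have himg : ∀ y : EuclideanSpace ℝ (Fin d),
      IsCompact ((fun a => (inner ℝ (radProj N a) y : ℝ)) '' X) := by
    intro y
    exact hX.image_of_continuousOn (hScont.inner continuousOn_const)
  have himgne : ∀ y : EuclideanSpace ℝ (Fin d),
      ((fun a => (inner ℝ (radProj N a) y : ℝ)) '' X).Nonempty := fun y => hXne.image _
  have hbdd : ∀ y : EuclideanSpace ℝ (Fin d),
      BddAbove ((fun a => (inner ℝ (radProj N a) y : ℝ)) '' X) := fun y => (himg y).bddAbove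
  have hgle : ∀ (y : EuclideanSpace ℝ (Fin d)) (a), a ∈ X → (inner ℝ (radProj N a) y : ℝ) ≤ g y :=
    fun y a ha => le_csSup (hbdd y) ⟨a, ha, rfl⟩
  have hgle' : ∀ (y : EuclideanSpace ℝ (Fin d)) (c : ℝ),
      (∀ a ∈ X, (inner ℝ (radProj N a) y : ℝ) ≤ c) → g y ≤ c := by
    intro y c hc
    exact csSup_le (himgne y) (by rintro _ ⟨a, ha, rfl⟩; exact hc a ha)
  have hgmem : ∀ y : EuclideanSpace ℝ (Fin d), ∃ a ∈ X, g y = (inner ℝ (radProj N a) y : ℝ) := by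
    intro y
    have := (himg y).sSup_mem (himgne y)
    obtain ⟨a, ha, heq⟩ := this
    exact ⟨a, ha, heq.symm⟩
  have hg0 : g 0 = 0 := by
    apply le_antisymm
    · exact hgle' 0 0 (fun a ha => by rw [inner_zero_right])
    · obtain ⟨a0, ha0⟩ := hXne
      have := hgle 0 a0 ha0
      rwa [inner_zero_right] at this
  -- conjugate computation
  have conj_eq : ∀ y : EuclideanSpace ℝ (Fin d), capraConj N (ind C) y = ((g y : ℝ) : EReal) := by
    intro y
    rw [capraConj]
    apply le_antisymm
    · apply iSup_le
      intro x
      by_cases hx : x ∈ C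
      · rw [ind, if_pos hx, sub_zero]
        obtain ⟨a, ha, heq⟩ := hrpC x hx
        rw [heq]
        exact_mod_cast hgle y a ha
      · rw [ind, if_neg hx, EReal.sub_top]
        exact bot_le
    · obtain ⟨a, ha, heq⟩ := hgmem y
      rw [heq]
      have hmem : a ∈ C := hXC ha
      have : ((inner ℝ (radProj N a) y : ℝ) : EReal) - ind C a
          = ((inner ℝ (radProj N a) y : ℝ) : EReal) := by
        rw [ind, if_pos hmem, sub_zero]
      exact this ▸ le_iSup (fun x => ((inner ℝ (radProj N x) y : ℝ) : EReal) - ind C x) a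
  -- biconjugate
  funext x
  rw [capraBiconj]
  have hbi : ∀ y : EuclideanSpace ℝ (Fin d),
      ((inner ℝ (radProj N x) y : ℝ) : EReal) - capraConj N (ind C) y
        = (((inner ℝ (radProj N x) y : ℝ) - g y : ℝ) : EReal) := by
    intro y
    rw [conj_eq y, ← EReal.coe_sub]
  simp only [hbi]
  by_cases hx : x ∈ C
  · rw [ind, if_pos hx]
    obtain ⟨a, ha, heq⟩ := hrpC x hx
    apply le_antisymm
    · have h00 : (((inner ℝ (radProj N x) (0 : EuclideanSpace ℝ (Fin d)) : ℝ) - g 0 : ℝ) : EReal) = 0 := by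
        rw [hg0, inner_zero_right, sub_zero, EReal.coe_zero]
      exact h00 ▸ le_iSup (fun y => (((inner ℝ (radProj N x) y : ℝ) - g y : ℝ) : EReal)) 0
    · apply iSup_le
      intro y
      have : (inner ℝ (radProj N x) y : ℝ) - g y ≤ 0 := by
        rw [heq]
        have := hgle y a ha
        linarith
      exact_mod_cast EReal.coe_le_coe_iff.2 this
  · rw [ind, if_neg hx]
    symm
    rw [EReal.eq_top_iff_forall_lt]
    intro r
    obtain ⟨f, u, hfu, hux⟩ := geometric_hahn_banach_closed_point hKconv hKclosed (key x hx)
    set v : EuclideanSpace ℝ (Fin d) := (InnerProductSpace.toDual ℝ _).symm f with hvdef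
    have hv : ∀ w : EuclideanSpace ℝ (Fin d), (inner ℝ w v : ℝ) = f w := by
      intro w
      rw [real_inner_comm]
      exact InnerProductSpace.toDual_symm_apply
    set ε : ℝ := f (radProj N x) - u with hεdef
    have hε : 0 < ε := sub_pos.2 hux
    set t : ℝ := (|r| + 1) / ε with htdef
    have ht : 0 < t := by positivity
    set y : EuclideanSpace ℝ (Fin d) := t • v with hydef
    have hgy : g y ≤ t * u := by
      apply hgle'
      intro a ha
      rw [hydef, inner_smul_right, hv]
      exact mul_le_mul_of_nonneg_left (le_of_lt (hfu _ (hSK ⟨a, ha, rfl⟩))) ht.le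
    have hxy : (inner ℝ (radProj N x) y : ℝ) = t * f (radProj N x) := by
      rw [hydef, inner_smul_right, hv]
    have hval : r < (inner ℝ (radProj N x) y : ℝ) - g y := by
      have h1 : t * ε = |r| + 1 := by
        rw [htdef, div_mul_cancel₀ _ (ne_of_gt hε)]
      have h2 : t * f (radProj N x) - t * u = t * ε := by rw [hεdef]; ring
      have h3 : r ≤ |r| := le_abs_self r
      nlinarith [hgy, hxy]
    calc (r : EReal) < (((inner ℝ (radProj N x) y : ℝ) - g y : ℝ) : EReal) := EReal.coe_lt_coe_iff.2 hval
      _ ≤ _ := le_iSup (fun y => (((inner ℝ (radProj N x) y : ℝ) - g y : ℝ) : EReal)) y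

end

lemma empty_case {d : ℕ} (N : EuclideanSpace ℝ (Fin d) → ℝ) :
    IsCapraConvex N (∅ : Set (EuclideanSpace ℝ (Fin d))) := by
  have hind : ∀ z, ind (∅ : Set (EuclideanSpace ℝ (Fin d))) z = ⊤ :=
    fun z => if_neg (Set.notMem_empty z)
  have hconj : ∀ y, capraConj N (ind (∅ : Set (EuclideanSpace ℝ (Fin d)))) y = ⊥ := by
    intro y
    rw [capraConj]
    have h : ∀ x, ((inner ℝ (radProj N x) y : ℝ) : EReal) - ind (∅ : Set (EuclideanSpace ℝ (Fin d))) x = ⊥ := by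
      intro x; rw [hind, EReal.sub_top]
    simp only [h, iSup_bot]
  funext z
  rw [hind, capraBiconj]
  have h0' : ((inner ℝ (radProj N z) (0 : EuclideanSpace ℝ (Fin d)) : ℝ) : EReal)
      - capraConj N (ind (∅ : Set (EuclideanSpace ℝ (Fin d)))) 0 = ⊤ := by
    rw [hconj, EReal.sub_bot (by rw [inner_zero_right]; exact EReal.coe_ne_bot 0)]
  exact (eq_top_iff.2 (h0' ▸ le_iSup (fun y => ((inner ℝ (radProj N z) y : ℝ) : EReal) - capraConj N (ind (∅ : Set (EuclideanSpace ℝ (Fin d)))) y) (0 : EuclideanSpace ℝ (Fin d)))).symm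

theorem stmt {d : ℕ} (N : EuclideanSpace ℝ (Fin d) → ℝ)
    (hN0 : ∀ x : EuclideanSpace ℝ (Fin d), N x = 0 ↔ x = 0)
    (hNh : ∀ (a : ℝ) (x : EuclideanSpace ℝ (Fin d)), N (a • x) = |a| * N x)
    (hNt : ∀ x y : EuclideanSpace ℝ (Fin d), N (x + y) ≤ N x + N y)
    (X : Set (EuclideanSpace ℝ (Fin d))) (hX : IsCompact X) (hXconv : Convex ℝ X)
    (h0 : (0 : EuclideanSpace ℝ (Fin d)) ∉ X) :
    IsCapraConvex N (coneHull X) := by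
  rcases X.eq_empty_or_nonempty with rfl | hXne
  · rw [show coneHull (∅ : Set (EuclideanSpace ℝ (Fin d))) = ∅ by ext z; simp [coneHull]]
    exact empty_case N
  · exact nonempty_case hN0 hNh hNt X hX hXconv h0 hXne
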